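/- Let X : ℕ → ℂ be a sequence of i.i.d. integrable complex random variables with E[|X|²] < ∞, and let ρ ∈ [0,1). Define S_N = ∑_{n₁=1}^{N} ∑_{n₂=1}^{N} ρ^{|n₁-n₂|} X[n₁] · conj(X[n₂]). Then E[S_N] = N·E[|X₁|²] + (2ρ/(1-ρ))·(N - (1-ρ^N)/(1-ρ))·|E[X₁]|². -/

import Mathlib

open MeasureTheory ProbabilityTheory

lemma geom_Icc_aux (ρ : ℝ) (hρ1 : ρ ≠ 1) (N : ℕ) :
    ∑ k ∈ Finset.Icc 1 N, ρ ^ k = ρ * (1 - ρ ^ N) / (1 - ρ) := by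
  have hne : (1:ℝ) - ρ ≠ 0 := sub_ne_zero.mpr (Ne.symm hρ1)
  induction N with
  | zero => simp
  | succ n ih =>
    rw [Finset.sum_Icc_succ_top (by omega), ih]
    field_simp
    ring

lemma refl_sum_aux (ρ : ℝ) (N : ℕ) :
    ∑ n ∈ Finset.Icc 1 N, ρ ^ (N + 1 - n) = ∑ k ∈ Finset.Icc 1 N, ρ ^ k := by
  refine Finset.sum_nbij' (fun n => N + 1 - n) (fun k => N + 1 - k) ?_ ?_ ?_ ?_ ?_
  · intro a ha; simp only [Finset.mem_Icc] at *; omega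
  · intro a ha; simp only [Finset.mem_Icc] at *; omega
  · intro a ha; simp only [Finset.mem_Icc] at ha; show N + 1 - (N + 1 - a) = a; omega
  · intro a ha; simp only [Finset.mem_Icc] at ha; show N + 1 - (N + 1 - a) = a; omega
  · intro a ha; rfl

lemma dist_sum_aux (ρ : ℝ) (hρ1 : ρ ≠ 1) (N : ℕ) :
    ∑ n₁ ∈ Finset.Icc 1 N, ∑ n₂ ∈ Finset.Icc 1 N, ρ ^ (Nat.dist n₁ n₂) =
      N + (2 * ρ / (1 - ρ)) * ((N : ℝ) - (1 - ρ ^ N) / (1 - ρ)) := by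
  have hne : (1:ℝ) - ρ ≠ 0 := sub_ne_zero.mpr (Ne.symm hρ1)
  induction N with
  | zero => simp
  | succ n ih =>
    rw [Finset.sum_Icc_succ_top (a := 1) (by omega)]
    have h1 : ∀ m ∈ Finset.Icc 1 n,
        (∑ n₂ ∈ Finset.Icc 1 (n+1), ρ ^ (Nat.dist m n₂)) =
          (∑ n₂ ∈ Finset.Icc 1 n, ρ ^ (Nat.dist m n₂)) + ρ ^ (n + 1 - m) := by
      intro m hm
      rw [Finset.sum_Icc_succ_top (by omega)]
      congr 2
      rw [Nat.dist_eq_sub_of_le (by simp only [Finset.mem_Icc] at hm; omega)]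
    rw [Finset.sum_congr rfl h1, Finset.sum_add_distrib, ih]
    rw [Finset.sum_Icc_succ_top (a := 1) (by omega), Nat.dist_self, pow_zero]
    have h2 : ∀ m ∈ Finset.Icc 1 n, ρ ^ (Nat.dist (n+1) m) = ρ ^ (n + 1 - m) := by
      intro m hm
      rw [Nat.dist_comm, Nat.dist_eq_sub_of_le (by simp only [Finset.mem_Icc] at hm; omega)]
    rw [Finset.sum_congr rfl h2]
    have h3 : ∑ m ∈ Finset.Icc 1 n, ρ ^ (n + 1 - m) = ρ * (1 - ρ ^ n) / (1 - ρ) := by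
      rw [refl_sum_aux, geom_Icc_aux ρ hρ1]
    rw [h3]
    push_cast
    field_simp
    ring

theorem stmt_4 {Ω : Type*} [MeasureSpace Ω] [IsProbabilityMeasure (ℙ : Measure Ω)]
    (X : ℕ → Ω → ℂ)
    (hindep : iIndepFun X ℙ)
    (hid : ∀ n, IdentDistrib (X n) (X 1) ℙ ℙ)
    (hint : Integrable (X 1) ℙ)
    (hint2 : Integrable (fun ω => ‖X 1 ω‖ ^ 2) ℙ)
    (ρ : ℝ) (hρ0 : 0 ≤ ρ) (hρ1 : ρ < 1) (N : ℕ) :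
    ∫ ω, (∑ n₁ ∈ Finset.Icc 1 N, ∑ n₂ ∈ Finset.Icc 1 N,
        (ρ : ℂ) ^ (Nat.dist n₁ n₂) * X n₁ ω * (starRingEnd ℂ) (X n₂ ω)) ∂ℙ =
      (N : ℂ) * ((∫ ω, ‖X 1 ω‖ ^ 2 ∂ℙ : ℝ) : ℂ) +
        (((2 * ρ / (1 - ρ)) * ((N : ℝ) - (1 - ρ ^ N) / (1 - ρ)) : ℝ) : ℂ) *
          ((‖∫ ω, X 1 ω ∂ℙ‖ ^ 2 : ℝ) : ℂ) := by
  set μc : ℂ := ∫ ω, X 1 ω ∂ℙ with hμc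
  set m2 : ℝ := ∫ ω, ‖X 1 ω‖ ^ 2 ∂ℙ with hm2
  have hm : ∀ n, Integrable (X n) ℙ := fun n => (hid n).integrable_iff.mpr hint
  have hmsq : Measurable (fun z : ℂ => ‖z‖ ^ 2) := measurable_norm.pow_const 2
  have hnsq : ∀ n, IdentDistrib (fun ω => ‖X n ω‖ ^ 2) (fun ω => ‖X 1 ω‖ ^ 2) ℙ ℙ :=
    fun n => (hid n).comp hmsq
  have hnd : ∀ n, Integrable (fun ω => ‖X n ω‖ ^ 2) ℙ :=
    fun n => (hnsq n).integrable_iff.mpr hint2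
  have hconj : ∀ n, Integrable (fun ω => (starRingEnd ℂ) (X n ω)) ℙ := by
    intro n
    exact ((Complex.conjCLE : ℂ ≃L[ℝ] ℂ) : ℂ →L[ℝ] ℂ).integrable_comp (hm n)
  have hsq_eq : ∀ (f : Ω → ℂ), (fun ω => f ω * (starRingEnd ℂ) (f ω)) =
      fun ω => ((‖f ω‖ ^ 2 : ℝ) : ℂ) := by
    intro f; funext ω; rw [Complex.mul_conj']; norm_cast
  -- per-term integrability
  have hterm : ∀ n₁ n₂ : ℕ, Integrable
      (fun ω => (ρ : ℂ) ^ (Nat.dist n₁ n₂) * X n₁ ω * (starRingEnd ℂ) (X n₂ ω)) ℙ := by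
    intro n₁ n₂
    by_cases h : n₁ = n₂
    · subst h
      simp only [Nat.dist_self, pow_zero, one_mul]
      rw [hsq_eq]
      exact (hnd n₁).ofReal
    · have hij : IndepFun (X n₁) (X n₂) ℙ := hindep.indepFun h
      have hij' : IndepFun (X n₁) (fun ω => (starRingEnd ℂ) (X n₂ ω)) ℙ :=
        hij.comp measurable_id (Complex.continuous_conj.measurable)
      have h2 : Integrable (fun ω => X n₁ ω * (starRingEnd ℂ) (X n₂ ω)) ℙ :=
        hij'.integrable_mul (hm n₁) (hconj n₂)
      simp only [mul_assoc]
      exact h2.const_mul _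
  -- per-term integral values
  have hdiag : ∀ n : ℕ,
      (∫ ω, (ρ : ℂ) ^ (Nat.dist n n) * X n ω * (starRingEnd ℂ) (X n ω) ∂ℙ) = (m2 : ℂ) := by
    intro n
    simp only [Nat.dist_self, pow_zero, one_mul]
    rw [hsq_eq]
    have h := Complex.ofRealCLM.integral_comp_comm (hnd n)
    simp only [Complex.ofRealCLM_apply] at h
    rw [h, (hnsq n).integral_eq]
  have hoff : ∀ n₁ n₂ : ℕ, n₁ ≠ n₂ →
      (∫ ω, (ρ : ℂ) ^ (Nat.dist n₁ n₂) * X n₁ ω * (starRingEnd ℂ) (X n₂ ω) ∂ℙ) =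
        ((ρ ^ (Nat.dist n₁ n₂) : ℝ) : ℂ) * ((‖μc‖ ^ 2 : ℝ) : ℂ) := by
    intro n₁ n₂ h
    have hij : IndepFun (X n₁) (X n₂) ℙ := hindep.indepFun h
    have ha1 : AEMeasurable (X n₁) ℙ := (hm n₁).1.aemeasurable
    have ha2 : AEMeasurable (X n₂) ℙ := (hm n₂).1.aemeasurable
    have hmap := (indepFun_iff_map_prod_eq_prod_map_map ha1 ha2).mp hij
    have hP1 : IsProbabilityMeasure ((ℙ : Measure Ω).map (X n₁)) := Measure.isProbabilityMeasure_map ha1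
    have hP2 : IsProbabilityMeasure ((ℙ : Measure Ω).map (X n₂)) := Measure.isProbabilityMeasure_map ha2
    have hmul : (∫ ω, X n₁ ω * (starRingEnd ℂ) (X n₂ ω) ∂ℙ) = μc * (starRingEnd ℂ) μc := by
      have e1 : (∫ z : ℂ × ℂ, z.1 * (starRingEnd ℂ) z.2
              ∂((ℙ : Measure Ω).map (fun ω => (X n₁ ω, X n₂ ω))))
          = ∫ ω, X n₁ ω * (starRingEnd ℂ) (X n₂ ω) ∂ℙ :=
        integral_map (ha1.prodMk ha2)
          (continuous_fst.mul
            (Complex.continuous_conj.comp continuous_snd)).aestronglyMeasurable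
      have e2 : (∫ z : ℂ, z ∂((ℙ : Measure Ω).map (X n₁))) = ∫ ω, X n₁ ω ∂ℙ :=
        integral_map ha1 aestronglyMeasurable_id
      have e3 : (∫ z : ℂ, (starRingEnd ℂ) z ∂((ℙ : Measure Ω).map (X n₂)))
          = ∫ ω, (starRingEnd ℂ) (X n₂ ω) ∂ℙ :=
        integral_map ha2 Complex.continuous_conj.aestronglyMeasurable
      rw [← e1, hmap,
        integral_prod_mul (f := fun z : ℂ => z) (g := fun z : ℂ => (starRingEnd ℂ) z),
        e2, e3, integral_conj, (hid n₁).integral_eq, (hid n₂).integral_eq, ← hμc]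
    simp only [mul_assoc]
    rw [integral_const_mul, hmul, Complex.mul_conj']
    push_cast
    ring
  -- swap integral and sums
  rw [integral_finset_sum _ (fun n₁ _ => integrable_finset_sum _ (fun n₂ _ => hterm n₁ n₂))]
  have hswap : ∀ n₁ ∈ Finset.Icc 1 N,
      (∫ ω, ∑ n₂ ∈ Finset.Icc 1 N,
        (ρ : ℂ) ^ (Nat.dist n₁ n₂) * X n₁ ω * (starRingEnd ℂ) (X n₂ ω) ∂ℙ) =
      ∑ n₂ ∈ Finset.Icc 1 N, ∫ ω,
        (ρ : ℂ) ^ (Nat.dist n₁ n₂) * X n₁ ω * (starRingEnd ℂ) (X n₂ ω) ∂ℙ := by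
    intro n₁ _
    exact integral_finset_sum _ (fun n₂ _ => hterm n₁ n₂)
  rw [Finset.sum_congr rfl hswap]
  -- rewrite each integral
  have hval : ∀ n₁ n₂ : ℕ,
      (∫ ω, (ρ : ℂ) ^ (Nat.dist n₁ n₂) * X n₁ ω * (starRingEnd ℂ) (X n₂ ω) ∂ℙ) =
        ((ρ ^ (Nat.dist n₁ n₂) : ℝ) : ℂ) * ((‖μc‖ ^ 2 : ℝ) : ℂ) +
          (if n₁ = n₂ then (m2 : ℂ) - ((‖μc‖ ^ 2 : ℝ) : ℂ) else 0) := by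
    intro n₁ n₂
    by_cases h : n₁ = n₂
    · subst h
      rw [hdiag n₁]
      simp [Nat.dist_self]
    · rw [hoff n₁ n₂ h]
      simp [h]
  simp only [hval]
  rw [Finset.sum_congr rfl (fun n₁ _ => Finset.sum_add_distrib), Finset.sum_add_distrib]
  have hA : (∑ n₁ ∈ Finset.Icc 1 N, ∑ n₂ ∈ Finset.Icc 1 N,
      ((ρ ^ (Nat.dist n₁ n₂) : ℝ) : ℂ) * ((‖μc‖ ^ 2 : ℝ) : ℂ)) =
      (((N : ℝ) + (2 * ρ / (1 - ρ)) * ((N : ℝ) - (1 - ρ ^ N) / (1 - ρ)) : ℝ) : ℂ) *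
        ((‖μc‖ ^ 2 : ℝ) : ℂ) := by
    have : ∀ n₁ ∈ Finset.Icc 1 N, (∑ n₂ ∈ Finset.Icc 1 N,
        ((ρ ^ (Nat.dist n₁ n₂) : ℝ) : ℂ) * ((‖μc‖ ^ 2 : ℝ) : ℂ)) =
        ((∑ n₂ ∈ Finset.Icc 1 N, ρ ^ (Nat.dist n₁ n₂) : ℝ) : ℂ) * ((‖μc‖ ^ 2 : ℝ) : ℂ) := by
      intro n₁ _
      rw [← Finset.sum_mul]
      push_cast
      ring
    rw [Finset.sum_congr rfl this, ← Finset.sum_mul]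
    congr 1
    rw [show (((N : ℝ) + (2 * ρ / (1 - ρ)) * ((N : ℝ) - (1 - ρ ^ N) / (1 - ρ)) : ℝ) : ℂ)
        = ((∑ n₁ ∈ Finset.Icc 1 N, ∑ n₂ ∈ Finset.Icc 1 N, ρ ^ (Nat.dist n₁ n₂) : ℝ) : ℂ)
      from by rw [dist_sum_aux ρ (by linarith) N]]
    push_cast
    rfl
  have hB : (∑ n₁ ∈ Finset.Icc 1 N, ∑ n₂ ∈ Finset.Icc 1 N,
      (if n₁ = n₂ then (m2 : ℂ) - ((‖μc‖ ^ 2 : ℝ) : ℂ) else 0)) =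
      (N : ℂ) * ((m2 : ℂ) - ((‖μc‖ ^ 2 : ℝ) : ℂ)) := by
    have : ∀ n₁ ∈ Finset.Icc 1 N,
        (∑ n₂ ∈ Finset.Icc 1 N, (if n₁ = n₂ then (m2 : ℂ) - ((‖μc‖ ^ 2 : ℝ) : ℂ) else 0)) =
          (m2 : ℂ) - ((‖μc‖ ^ 2 : ℝ) : ℂ) := by
      intro n₁ h₁
      rw [Finset.sum_ite_eq]
      simp [h₁]
    rw [Finset.sum_congr rfl this, Finset.sum_const, Nat.card_Icc]
    simp [nsmul_eq_mul]
  rw [hA, hB]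
  push_cast
  ring
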